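/- Pairwise optimality implies minimax optimality: fix n ≥ 1 and λ > 0. For μ, q_0, q_1 ∈ [0,1], let θ̂(μ, q_0, q_1) denote the report structure in which Pr[ω=1] = μ and, conditional on ω, the n reports X_i ∈ {0,1} are i.i.d. with Pr[X_i=1 | ω=1] = q_1 and Pr[X_i=1 | ω=0] = q_0; the symmetric partner of θ̂(μ, q_0, q_1) is θ̂(1−μ, 1−q_1, 1−q_0). Suppose that for every report structure θ̂ ∈ Θ̂^ciid_λ, with symmetric partner θ̂′, majority voting maximizes f ↦ U(f, θ̂) + U(f, θ̂′) over all aggregators f. Then majority voting minimizes the worst-case regret: sup_{θ̂ ∈ Θ̂^ciid_λ} R(f^maj, θ̂) = min over aggregators f of sup_{θ̂ ∈ Θ̂^ciid_λ} R(f, θ̂). -/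

import Mathlib

open Real Finset

/-- Quantal response function `ψ_λ(p) = 1/(1 + exp(2λ(1−2p)))`. -/
noncomputable def psi (lam p : ℝ) : ℝ := 1 / (1 + Real.exp (2 * lam * (1 - 2 * p)))

/-- A c.i.i.d. signal structure with finite signal set `Fin k`: prior `prior = Pr[ω = 1]`
and conditional signal laws `nu0 s = Pr[S_i = s | ω = 0]`, `nu1 s = Pr[S_i = s | ω = 1]`,
common to all experts, with signals i.i.d. conditionally on `ω`. -/
structure SignalStructure where
  k : ℕ
  prior : ℝ
  nu0 : Fin k → ℝ
  nu1 : Fin k → ℝ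
  prior_nonneg : 0 ≤ prior
  prior_le_one : prior ≤ 1
  nu0_nonneg : ∀ s, 0 ≤ nu0 s
  nu1_nonneg : ∀ s, 0 ≤ nu1 s
  nu0_sum : ∑ s, nu0 s = 1
  nu1_sum : ∑ s, nu1 s = 1

/-- Posterior `Pr_θ[ω = 1 | S_i = s]` (set to `0` on null signals). -/
noncomputable def posterior (θ : SignalStructure) (s : Fin θ.k) : ℝ :=
  if θ.prior * θ.nu1 s + (1 - θ.prior) * θ.nu0 s = 0 then 0
  else θ.prior * θ.nu1 s / (θ.prior * θ.nu1 s + (1 - θ.prior) * θ.nu0 s)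

/-- `Pr[X_i = 1 | ω = w]` when each expert reports `1` with probability
`ψ(Pr_θ[ω = 1 | S_i = s])` given its signal `s`. -/
noncomputable def reportProb (θ : SignalStructure) (ψ : ℝ → ℝ) (w : Bool) : ℝ :=
  ∑ s, (if w then θ.nu1 s else θ.nu0 s) * ψ (posterior θ s)

/-- The joint law of `(ω, X_1, …, X_n)` in which `Pr[ω = 1] = μ` and, conditionally
on `ω`, the binary reports `X_i` are i.i.d. with `Pr[X_i = 1 | ω = 1] = q1` and
`Pr[X_i = 1 | ω = 0] = q0`. -/
noncomputable def repOf (n : ℕ) (μ q0 q1 : ℝ) : Bool → (Fin n → Bool) → ℝ :=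
  fun w x =>
    (if w then μ else 1 - μ) *
      ∏ i, (if x i then (if w then q1 else q0) else 1 - (if w then q1 else q0))

/-- The report structure `rep(θ, ψ)`: the joint law of `(ω, X_1, …, X_n)` induced
by the signal structure `θ` and the response function `ψ`. -/
noncomputable def rep (n : ℕ) (θ : SignalStructure) (ψ : ℝ → ℝ) :
    Bool → (Fin n → Bool) → ℝ :=
  repOf n θ.prior (reportProb θ ψ false) (reportProb θ ψ true)

/-- The set `Θ̂^ciid_λ` of report structures induced by all c.i.i.d. signal structures. -/
noncomputable def repSet (n : ℕ) (lam : ℝ) : Set (Bool → (Fin n → Bool) → ℝ) :=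
  {r | ∃ θ : SignalStructure, rep n θ (psi lam) = r}

/-- `Pr[ω = w, X = x]` where `X = Σ_i X_i` counts the experts reporting `1`. -/
noncomputable def jointProb (n : ℕ) (r : Bool → (Fin n → Bool) → ℝ) (w : Bool) (x : ℕ) : ℝ :=
  ∑ v : Fin n → Bool,
    if (Finset.univ.filter (fun i => v i = true)).card = x then r w v else 0

/-- Utility `U(f, θ̂) = Σ_x Pr[X=x]·(2Pr[ω=1|X=x]−1)·(2f(x)−1)
             = Σ_x (2f(x)−1)·(Pr[ω=1,X=x] − Pr[ω=0,X=x])`. -/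
noncomputable def U (n : ℕ) (f : ℕ → ℝ) (r : Bool → (Fin n → Bool) → ℝ) : ℝ :=
  ∑ x ∈ Finset.range (n + 1),
    (2 * f x - 1) * (jointProb n r true x - jointProb n r false x)

/-- The omniscient aggregator `opt_θ̂`: sends `x` to `1`, `1/2`, `0` according as
`Pr[ω=1 | X=x]` is `>`, `=`, `<` `1/2`. -/
noncomputable def optAgg (n : ℕ) (r : Bool → (Fin n → Bool) → ℝ) : ℕ → ℝ := fun x =>
  if jointProb n r false x < jointProb n r true x then 1
  else if jointProb n r true x = jointProb n r false x then 1 / 2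
  else 0

/-- Regret `R(f, θ̂) = U(opt_θ̂, θ̂) − U(f, θ̂)`. -/
noncomputable def regret (n : ℕ) (f : ℕ → ℝ) (r : Bool → (Fin n → Bool) → ℝ) : ℝ :=
  U n (optAgg n r) r - U n f r

/-- An aggregator `f : {0,…,n} → [0,1]`. -/
def IsAggregator (f : ℕ → ℝ) : Prop := ∀ x, 0 ≤ f x ∧ f x ≤ 1

/-- Majority voting `f^maj`. -/
noncomputable def fmaj (n : ℕ) : ℕ → ℝ := fun x =>
  if 2 * x < n then 0 else if 2 * x = n then 1 / 2 else 1

/-- Worst-case regret of aggregator `f` over all c.i.i.d.-induced report structures. -/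
noncomputable def worstRegret (n : ℕ) (lam : ℝ) (f : ℕ → ℝ) : ℝ :=
  sSup {t : ℝ | ∃ r ∈ repSet n lam, t = regret n f r}


/-! ### Auxiliary lemmas -/

lemma psi_pos (lam p : ℝ) : 0 < psi lam p := by
  unfold psi; positivity

lemma psi_le_one (lam p : ℝ) : psi lam p ≤ 1 := by
  unfold psi
  rw [div_le_one (by positivity)]
  linarith [Real.exp_pos (2 * lam * (1 - 2 * p))]

lemma psi_one_sub (lam p : ℝ) : psi lam (1 - p) = 1 - psi lam p := by
  unfold psi
  have h1 : (0:ℝ) < 1 + Real.exp (2 * lam * (1 - 2 * p)) := by positivity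
  have he : Real.exp (2 * lam * (1 - 2 * (1 - p)))
      = (Real.exp (2 * lam * (1 - 2 * p)))⁻¹ := by
    rw [← Real.exp_neg]; ring_nf
  rw [he]
  have h2 := Real.exp_pos (2 * lam * (1 - 2 * p))
  field_simp
  ring

lemma reportProb_nonneg (θ : SignalStructure) (lam : ℝ) (w : Bool) :
    0 ≤ reportProb θ (psi lam) w := by
  unfold reportProb
  apply Finset.sum_nonneg
  intro s _
  apply mul_nonneg _ (psi_pos lam _).le
  cases w
  · simpa using θ.nu0_nonneg s
  · simpa using θ.nu1_nonneg s

lemma reportProb_le_one (θ : SignalStructure) (lam : ℝ) (w : Bool) :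
    reportProb θ (psi lam) w ≤ 1 := by
  unfold reportProb
  have h : ∀ s ∈ Finset.univ, (if w then θ.nu1 s else θ.nu0 s) * psi lam (posterior θ s)
      ≤ (if w then θ.nu1 s else θ.nu0 s) := by
    intro s _
    have hnn : 0 ≤ (if w then θ.nu1 s else θ.nu0 s) := by
      cases w
      · simpa using θ.nu0_nonneg s
      · simpa using θ.nu1_nonneg s
    calc (if w then θ.nu1 s else θ.nu0 s) * psi lam (posterior θ s)
        ≤ (if w then θ.nu1 s else θ.nu0 s) * 1 :=
          mul_le_mul_of_nonneg_left (psi_le_one _ _) hnn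
      _ = _ := mul_one _
  refine le_trans (Finset.sum_le_sum h) ?_
  cases w
  · simp [θ.nu0_sum]
  · simp [θ.nu1_sum]

/-- The symmetric partner signal structure. -/
noncomputable def partner (θ : SignalStructure) : SignalStructure where
  k := θ.k
  prior := 1 - θ.prior
  nu0 := θ.nu1
  nu1 := θ.nu0
  prior_nonneg := by linarith [θ.prior_le_one]
  prior_le_one := by linarith [θ.prior_nonneg]
  nu0_nonneg := θ.nu1_nonneg
  nu1_nonneg := θ.nu0_nonneg
  nu0_sum := θ.nu1_sum
  nu1_sum := θ.nu0_sum

lemma posterior_partner (θ : SignalStructure) (s : Fin θ.k)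
    (h : 0 < θ.prior * θ.nu1 s + (1 - θ.prior) * θ.nu0 s) :
    posterior (partner θ) s = 1 - posterior θ s := by
  unfold posterior
  have hD : (partner θ).prior * (partner θ).nu1 s + (1 - (partner θ).prior) * (partner θ).nu0 s
      = θ.prior * θ.nu1 s + (1 - θ.prior) * θ.nu0 s := by
    show (1 - θ.prior) * θ.nu0 s + (1 - (1 - θ.prior)) * θ.nu1 s = _
    ring
  rw [hD, if_neg h.ne', if_neg h.ne']
  show (1 - θ.prior) * θ.nu0 s / _ = _
  field_simp
  ring

lemma reportProb_partner_true (θ : SignalStructure) (lam : ℝ) (h : θ.prior < 1) :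
    reportProb (partner θ) (psi lam) true = 1 - reportProb θ (psi lam) false := by
  unfold reportProb
  simp only [if_true, Bool.false_eq_true, if_false]
  have h1 : ∀ s ∈ Finset.univ, (partner θ).nu1 s * psi lam (posterior (partner θ) s)
      = θ.nu0 s * (1 - psi lam (posterior θ s)) := by
    intro s _
    show θ.nu0 s * psi lam (posterior (partner θ) s) = _
    rcases eq_or_lt_of_le (θ.nu0_nonneg s) with h0 | h0
    · rw [← h0]; ring
    · rw [posterior_partner θ s (by nlinarith [θ.nu1_nonneg s, θ.prior_nonneg]), psi_one_sub]
  rw [Finset.sum_congr rfl h1]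
  show (∑ s : Fin θ.k, θ.nu0 s * (1 - psi lam (posterior θ s))) = _
  have h2 : ∀ s ∈ Finset.univ, θ.nu0 s * (1 - psi lam (posterior θ s))
      = θ.nu0 s - θ.nu0 s * psi lam (posterior θ s) := by intro s _; ring
  rw [Finset.sum_congr rfl h2, Finset.sum_sub_distrib, θ.nu0_sum]

lemma reportProb_partner_false (θ : SignalStructure) (lam : ℝ) (h : 0 < θ.prior) :
    reportProb (partner θ) (psi lam) false = 1 - reportProb θ (psi lam) true := by
  unfold reportProb
  simp only [if_true, Bool.false_eq_true, if_false]
  have h1 : ∀ s ∈ Finset.univ, (partner θ).nu0 s * psi lam (posterior (partner θ) s)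
      = θ.nu1 s * (1 - psi lam (posterior θ s)) := by
    intro s _
    show θ.nu1 s * psi lam (posterior (partner θ) s) = _
    rcases eq_or_lt_of_le (θ.nu1_nonneg s) with h0 | h0
    · rw [← h0]; ring
    · rw [posterior_partner θ s (by nlinarith [θ.nu0_nonneg s, θ.prior_le_one]), psi_one_sub]
  rw [Finset.sum_congr rfl h1]
  show (∑ s : Fin θ.k, θ.nu1 s * (1 - psi lam (posterior θ s))) = _
  have h2 : ∀ s ∈ Finset.univ, θ.nu1 s * (1 - psi lam (posterior θ s))
      = θ.nu1 s - θ.nu1 s * psi lam (posterior θ s) := by intro s _; ring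
  rw [Finset.sum_congr rfl h2, Finset.sum_sub_distrib, θ.nu1_sum]

lemma rep_partner (n : ℕ) (θ : SignalStructure) (lam : ℝ) :
    rep n (partner θ) (psi lam)
      = repOf n (1 - θ.prior) (1 - reportProb θ (psi lam) true)
          (1 - reportProb θ (psi lam) false) := by
  unfold rep
  have hp : (partner θ).prior = 1 - θ.prior := rfl
  rw [hp]
  funext w v
  cases w with
  | false =>
    rcases eq_or_lt_of_le θ.prior_nonneg with h | h
    · show (if false then _ else (1 - (1 - θ.prior))) * _
        = (if false then _ else (1 - (1 - θ.prior))) * _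
      simp only [Bool.false_eq_true, if_false]
      rw [show (1 - (1 - θ.prior)) = θ.prior by ring, ← h]
      simp
    · rw [reportProb_partner_false θ lam h]
      simp [repOf]
  | true =>
    rcases lt_or_eq_of_le θ.prior_le_one with h | h
    · rw [reportProb_partner_true θ lam h]
      simp [repOf]
    · show (if true then (1 - θ.prior) else _) * _ = (if true then (1 - θ.prior) else _) * _
      simp only [if_true]
      rw [h]
      simp


/-- Coordinatewise negation as an equivalence. -/
def notEquiv (n : ℕ) : (Fin n → Bool) ≃ (Fin n → Bool) where
  toFun v i := !(v i)
  invFun v i := !(v i)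
  left_inv v := by funext i; simp
  right_inv v := by funext i; simp

lemma card_not (n : ℕ) (v : Fin n → Bool) :
    (Finset.univ.filter (fun i => (!(v i)) = true)).card
      = n - (Finset.univ.filter (fun i => v i = true)).card := by
  have h : (Finset.univ.filter (fun i => (!(v i)) = true))
      = Finset.univ \ (Finset.univ.filter (fun i => v i = true)) := by
    ext i; simp
  rw [h, Finset.card_sdiff_of_subset (Finset.filter_subset _ _)]
  simp

lemma card_filter_le_n (n : ℕ) (v : Fin n → Bool) :
    (Finset.univ.filter (fun i => v i = true)).card ≤ n := by
  simpa using Finset.card_filter_le Finset.univ (fun i => v i = true)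

lemma repOf_flip (n : ℕ) (μ q0 q1 : ℝ) (w : Bool) (v : Fin n → Bool) :
    repOf n (1 - μ) (1 - q1) (1 - q0) w v = repOf n μ q0 q1 (!w) (fun i => !(v i)) := by
  unfold repOf
  cases w <;> simp only [Bool.not_true, Bool.not_false, Bool.false_eq_true, if_false, if_true] <;>
  · refine congrArg₂ _ (by ring) ?_
    refine Finset.prod_congr rfl fun i _ => ?_
    cases hv : v i <;> simp <;> ring

lemma jointProb_flip (n : ℕ) (μ q0 q1 : ℝ) (w : Bool) (x : ℕ) (hx : x ≤ n) :
    jointProb n (repOf n (1 - μ) (1 - q1) (1 - q0)) w x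
      = jointProb n (repOf n μ q0 q1) (!w) (n - x) := by
  unfold jointProb
  apply Fintype.sum_equiv (notEquiv n)
  intro v
  have hc := card_not n v
  have hle := card_filter_le_n n v
  have hcond : ((Finset.univ.filter (fun i => (notEquiv n v) i = true)).card = n - x)
      ↔ ((Finset.univ.filter (fun i => v i = true)).card = x) := by
    show ((Finset.univ.filter (fun i => (!(v i)) = true)).card = n - x) ↔ _
    rw [hc]
    omega
  by_cases h : (Finset.univ.filter (fun i => v i = true)).card = x
  · rw [if_pos h, if_pos (hcond.mpr h), repOf_flip]
    rfl
  · rw [if_neg h, if_neg (fun hh => h (hcond.mp hh))]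

lemma repOf_mem_Icc (n : ℕ) (μ q0 q1 : ℝ) (hμ : μ ∈ Set.Icc (0:ℝ) 1)
    (h0 : q0 ∈ Set.Icc (0:ℝ) 1) (h1 : q1 ∈ Set.Icc (0:ℝ) 1) (w : Bool) (v : Fin n → Bool) :
    repOf n μ q0 q1 w v ∈ Set.Icc (0:ℝ) 1 := by
  unfold repOf
  have hw : (if w then μ else 1 - μ) ∈ Set.Icc (0:ℝ) 1 := by
    cases w <;> simp <;> constructor <;> linarith [hμ.1, hμ.2]
  have hprod : (∏ i, (if v i then (if w then q1 else q0) else 1 - (if w then q1 else q0)))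
      ∈ Set.Icc (0:ℝ) 1 := by
    constructor
    · apply Finset.prod_nonneg
      intro i _
      cases v i <;> cases w <;> simp <;> linarith [h0.1, h0.2, h1.1, h1.2]
    · apply Finset.prod_le_one
      · intro i _
        cases v i <;> cases w <;> simp <;> linarith [h0.1, h0.2, h1.1, h1.2]
      · intro i _
        cases v i <;> cases w <;> simp <;> linarith [h0.1, h0.2, h1.1, h1.2]
  exact ⟨mul_nonneg hw.1 hprod.1, le_trans (mul_le_mul hw.2 hprod.2 hprod.1 zero_le_one) (by simp)⟩

lemma jointProb_abs_le (n : ℕ) (r : Bool → (Fin n → Bool) → ℝ)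
    (hr : ∀ w v, r w v ∈ Set.Icc (0:ℝ) 1) (w : Bool) (x : ℕ) :
    |jointProb n r w x| ≤ (2:ℝ)^n := by
  unfold jointProb
  calc |∑ v : Fin n → Bool, if (Finset.univ.filter (fun i => v i = true)).card = x then r w v else 0|
      ≤ ∑ v : Fin n → Bool, |if (Finset.univ.filter (fun i => v i = true)).card = x then r w v else 0| :=
        Finset.abs_sum_le_sum_abs _ _
    _ ≤ ∑ _v : Fin n → Bool, (1:ℝ) := by
        apply Finset.sum_le_sum
        intro v _
        split_ifs with h
        · rw [abs_of_nonneg (hr w v).1]; exact (hr w v).2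
        · simp
    _ = (2:ℝ)^n := by
        simp [Finset.card_univ]


lemma optAgg_isAggregator (n : ℕ) (r : Bool → (Fin n → Bool) → ℝ) :
    IsAggregator (optAgg n r) := by
  intro x
  unfold optAgg
  split_ifs <;> norm_num

lemma fmaj_isAggregator (n : ℕ) : IsAggregator (fmaj n) := by
  intro x
  unfold fmaj
  split_ifs <;> norm_num

lemma U_le_opt (n : ℕ) (f : ℕ → ℝ) (r : Bool → (Fin n → Bool) → ℝ)
    (hf : IsAggregator f) : U n f r ≤ U n (optAgg n r) r := by
  unfold U optAgg
  apply Finset.sum_le_sum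
  intro x _
  obtain ⟨h0, h1⟩ := hf x
  split_ifs with hlt heq
  · nlinarith
  · rw [heq]; simp
  · push_neg at hlt
    have h : jointProb n r true x < jointProb n r false x := lt_of_le_of_ne hlt heq
    nlinarith

lemma regret_nonneg (n : ℕ) (f : ℕ → ℝ) (r : Bool → (Fin n → Bool) → ℝ)
    (hf : IsAggregator f) : 0 ≤ regret n f r :=
  sub_nonneg.mpr (U_le_opt n f r hf)

lemma U_opt_eq (n : ℕ) (r : Bool → (Fin n → Bool) → ℝ) :
    U n (optAgg n r) r
      = ∑ x ∈ Finset.range (n + 1), |jointProb n r true x - jointProb n r false x| := by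
  unfold U optAgg
  apply Finset.sum_congr rfl
  intro x _
  split_ifs with hlt heq
  · rw [abs_of_pos (by linarith)]; ring
  · rw [heq]; simp
  · push_neg at hlt
    have h : jointProb n r true x < jointProb n r false x := lt_of_le_of_ne hlt heq
    rw [abs_of_neg (by linarith)]; ring

lemma U_abs_le (n : ℕ) (f : ℕ → ℝ) (r : Bool → (Fin n → Bool) → ℝ)
    (hf : IsAggregator f) (hr : ∀ w v, r w v ∈ Set.Icc (0:ℝ) 1) :
    |U n f r| ≤ (n + 1 : ℝ) * (2 * 2^n) := by
  unfold U
  calc |∑ x ∈ Finset.range (n+1), (2 * f x - 1) * (jointProb n r true x - jointProb n r false x)|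
      ≤ ∑ x ∈ Finset.range (n+1), |(2 * f x - 1) * (jointProb n r true x - jointProb n r false x)| :=
        Finset.abs_sum_le_sum_abs _ _
    _ ≤ ∑ _x ∈ Finset.range (n+1), (2 * 2^n : ℝ) := by
        apply Finset.sum_le_sum
        intro x _
        rw [abs_mul]
        have h1 : |2 * f x - 1| ≤ 1 := by
          rw [abs_le]; constructor <;> linarith [(hf x).1, (hf x).2]
        have h2 : |jointProb n r true x - jointProb n r false x| ≤ 2 * 2^n := by
          have ha := jointProb_abs_le n r hr true x
          have hb := jointProb_abs_le n r hr false x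
          have := abs_sub (jointProb n r true x) (jointProb n r false x)
          linarith
        nlinarith [abs_nonneg (jointProb n r true x - jointProb n r false x)]
    _ = (n + 1 : ℝ) * (2 * 2^n) := by
        rw [Finset.sum_const, Finset.card_range]
        push_cast
        ring

lemma regret_le_bound (n : ℕ) (f : ℕ → ℝ) (r : Bool → (Fin n → Bool) → ℝ)
    (hf : IsAggregator f) (hr : ∀ w v, r w v ∈ Set.Icc (0:ℝ) 1) :
    regret n f r ≤ 2 * ((n + 1 : ℝ) * (2 * 2^n)) := by
  unfold regret
  have h1 := U_abs_le n (optAgg n r) r (optAgg_isAggregator n r) hr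
  have h2 := U_abs_le n f r hf hr
  rw [abs_le] at h1 h2
  linarith [h1.2, h2.1]

lemma fmaj_reflect (n x : ℕ) (hx : x ≤ n) : fmaj n (n - x) = 1 - fmaj n x := by
  unfold fmaj
  split_ifs <;> first | omega | norm_num

lemma U_fmaj_flip (n : ℕ) (μ q0 q1 : ℝ) :
    U n (fmaj n) (repOf n (1 - μ) (1 - q1) (1 - q0)) = U n (fmaj n) (repOf n μ q0 q1) := by
  unfold U
  conv_rhs => rw [← Finset.sum_range_reflect]
  apply Finset.sum_congr rfl
  intro x hx
  have hx' : x ≤ n := by rw [Finset.mem_range] at hx; omega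
  have h1 : n + 1 - 1 - x = n - x := by omega
  have h2 : n - (n - x) = x := by omega
  rw [h1, fmaj_reflect n x hx',
    jointProb_flip n μ q0 q1 true x hx', jointProb_flip n μ q0 q1 false x hx',
    Bool.not_true, Bool.not_false]
  ring

lemma Uopt_flip (n : ℕ) (μ q0 q1 : ℝ) :
    U n (optAgg n (repOf n (1 - μ) (1 - q1) (1 - q0))) (repOf n (1 - μ) (1 - q1) (1 - q0))
      = U n (optAgg n (repOf n μ q0 q1)) (repOf n μ q0 q1) := by
  rw [U_opt_eq, U_opt_eq]
  conv_rhs => rw [← Finset.sum_range_reflect]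
  apply Finset.sum_congr rfl
  intro x hx
  have hx' : x ≤ n := by rw [Finset.mem_range] at hx; omega
  have h1 : n + 1 - 1 - x = n - x := by omega
  have h2 : n - (n - x) = x := by omega
  rw [h1, jointProb_flip n μ q0 q1 true x hx', jointProb_flip n μ q0 q1 false x hx',
    Bool.not_true, Bool.not_false]
  exact abs_sub_comm _ _

lemma regret_fmaj_flip (n : ℕ) (μ q0 q1 : ℝ) :
    regret n (fmaj n) (repOf n (1 - μ) (1 - q1) (1 - q0)) = regret n (fmaj n) (repOf n μ q0 q1) := by
  unfold regret
  rw [U_fmaj_flip, Uopt_flip]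

/-- A trivial signal structure witnessing nonemptiness of `repSet`. -/
noncomputable def theta0 : SignalStructure where
  k := 1
  prior := 1/2
  nu0 := fun _ => 1
  nu1 := fun _ => 1
  prior_nonneg := by norm_num
  prior_le_one := by norm_num
  nu0_nonneg := fun _ => zero_le_one
  nu1_nonneg := fun _ => zero_le_one
  nu0_sum := by simp
  nu1_sum := by simp

lemma repSet_nonempty (n : ℕ) (lam : ℝ) : (repSet n lam).Nonempty :=
  ⟨rep n theta0 (psi lam), ⟨theta0, rfl⟩⟩

/-- **Pairwise optimality implies minimax optimality.** Fix `n ≥ 1` and `λ > 0`. Suppose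
that for every report structure `θ̂ = θ̂(μ, q₀, q₁) ∈ Θ̂^ciid_λ`, with symmetric partner
`θ̂′ = θ̂(1−μ, 1−q₁, 1−q₀)`, majority voting maximizes `f ↦ U(f, θ̂) + U(f, θ̂′)` over all
aggregators `f`. Then majority voting minimizes the worst-case regret: its worst-case
regret over `Θ̂^ciid_λ` equals the minimax regret over all aggregators. -/
theorem pairwise_optimality_implies_minimax (n : ℕ) (hn : 1 ≤ n) (lam : ℝ) (hlam : 0 < lam)
    (hpair : ∀ μ q0 q1 : ℝ, μ ∈ Set.Icc (0 : ℝ) 1 → q0 ∈ Set.Icc (0 : ℝ) 1 →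
      q1 ∈ Set.Icc (0 : ℝ) 1 → repOf n μ q0 q1 ∈ repSet n lam →
      ∀ f : ℕ → ℝ, IsAggregator f →
        U n f (repOf n μ q0 q1) + U n f (repOf n (1 - μ) (1 - q1) (1 - q0)) ≤
          U n (fmaj n) (repOf n μ q0 q1) +
            U n (fmaj n) (repOf n (1 - μ) (1 - q1) (1 - q0))) :
    worstRegret n lam (fmaj n) =
      sInf {t : ℝ | ∃ f : ℕ → ℝ, IsAggregator f ∧ t = worstRegret n lam f} := by
  classical
  have hrep : ∀ r ∈ repSet n lam, ∀ w v, r w v ∈ Set.Icc (0:ℝ) 1 := by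
    rintro r ⟨θ, rfl⟩ w v
    exact repOf_mem_Icc n θ.prior _ _ ⟨θ.prior_nonneg, θ.prior_le_one⟩
      ⟨reportProb_nonneg θ lam false, reportProb_le_one θ lam false⟩
      ⟨reportProb_nonneg θ lam true, reportProb_le_one θ lam true⟩ w v
  have hSne : ∀ f : ℕ → ℝ, {t : ℝ | ∃ r ∈ repSet n lam, t = regret n f r}.Nonempty :=
    fun f => ⟨regret n f (rep n theta0 (psi lam)), ⟨rep n theta0 (psi lam), ⟨theta0, rfl⟩, rfl⟩⟩
  have hbdd : ∀ f : ℕ → ℝ, IsAggregator f →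
      BddAbove {t : ℝ | ∃ r ∈ repSet n lam, t = regret n f r} := by
    intro f hf
    refine ⟨2 * ((n + 1 : ℝ) * (2 * 2^n)), ?_⟩
    rintro t ⟨r, hr, rfl⟩
    exact regret_le_bound n f r hf (hrep r hr)
  have hWR0 : ∀ f : ℕ → ℝ, IsAggregator f → 0 ≤ worstRegret n lam f := by
    intro f hf
    refine le_trans (regret_nonneg n f (rep n theta0 (psi lam)) hf) ?_
    exact le_csSup (hbdd f hf) ⟨rep n theta0 (psi lam), ⟨theta0, rfl⟩, rfl⟩
  have hmain : ∀ f : ℕ → ℝ, IsAggregator f →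
      worstRegret n lam (fmaj n) ≤ worstRegret n lam f := by
    intro f hf
    apply csSup_le (hSne (fmaj n))
    rintro t ⟨r, hrmem, rfl⟩
    obtain ⟨θ, hθ⟩ := hrmem
    subst hθ
    have hμ : θ.prior ∈ Set.Icc (0:ℝ) 1 := ⟨θ.prior_nonneg, θ.prior_le_one⟩
    have hq0 : reportProb θ (psi lam) false ∈ Set.Icc (0:ℝ) 1 :=
      ⟨reportProb_nonneg θ lam false, reportProb_le_one θ lam false⟩
    have hq1 : reportProb θ (psi lam) true ∈ Set.Icc (0:ℝ) 1 :=
      ⟨reportProb_nonneg θ lam true, reportProb_le_one θ lam true⟩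
    have hp := hpair θ.prior (reportProb θ (psi lam) false) (reportProb θ (psi lam) true)
      hμ hq0 hq1 ⟨θ, rfl⟩ f hf
    have hr' : repOf n (1 - θ.prior) (1 - reportProb θ (psi lam) true)
        (1 - reportProb θ (psi lam) false) ∈ repSet n lam :=
      ⟨partner θ, rep_partner n θ lam⟩
    have hflip := regret_fmaj_flip n θ.prior (reportProb θ (psi lam) false)
      (reportProb θ (psi lam) true)
    have e1 : regret n (fmaj n)
          (repOf n θ.prior (reportProb θ (psi lam) false) (reportProb θ (psi lam) true))
        + regret n (fmaj n) (repOf n (1 - θ.prior) (1 - reportProb θ (psi lam) true)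
            (1 - reportProb θ (psi lam) false))
        ≤ regret n f
          (repOf n θ.prior (reportProb θ (psi lam) false) (reportProb θ (psi lam) true))
        + regret n f (repOf n (1 - θ.prior) (1 - reportProb θ (psi lam) true)
            (1 - reportProb θ (psi lam) false)) := by
      unfold regret
      linarith [hp]
    have h2a : regret n f
        (repOf n θ.prior (reportProb θ (psi lam) false) (reportProb θ (psi lam) true))
        ≤ worstRegret n lam f :=
      le_csSup (hbdd f hf) ⟨_, ⟨θ, rfl⟩, rfl⟩
    have h2b : regret n f (repOf n (1 - θ.prior) (1 - reportProb θ (psi lam) true)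
        (1 - reportProb θ (psi lam) false)) ≤ worstRegret n lam f :=
      le_csSup (hbdd f hf) ⟨_, hr', rfl⟩
    show regret n (fmaj n)
        (repOf n θ.prior (reportProb θ (psi lam) false) (reportProb θ (psi lam) true))
        ≤ worstRegret n lam f
    linarith [hflip, e1, h2a, h2b]
  apply le_antisymm
  · refine le_csInf ⟨worstRegret n lam (fmaj n), ⟨fmaj n, fmaj_isAggregator n, rfl⟩⟩ ?_
    rintro b ⟨f, hf, rfl⟩
    exact hmain f hf
  · apply csInf_le
    · refine ⟨0, ?_⟩
      rintro b ⟨f, hf, rfl⟩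
      exact hWR0 f hf
    · exact ⟨fmaj n, fmaj_isAggregator n, rfl⟩
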